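/- arXiv:1710.05892 — 2 statements merged into one kernel-verified Lean document; each statement's English description precedes it below -/
import Mathlib

section
/- Let P ∈ NS be a no-signalling behaviour in the (2,2,2,2) Bell scenario whose CHSH value β := ⟨A₀B₀⟩ + ⟨A₀B₁⟩ + ⟨A₁B₀⟩ − ⟨A₁B₁⟩ satisfies β > 2. Then the visibility of P against white noise equals (β − 2)/β; that is, inf{λ ∈ [0,1] : (1−λ)P + λP₀ ∈ L} = (β − 2)/β, where P₀ is the behaviour with P₀(ab|xy) = 1/4 for all a,b,x,y. -/
open Matrix Kronecker ComplexOrder BigOperators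

/-- A behaviour in the (2,2,2,2) Bell scenario: `P a b x y = P(ab|xy)`. -/
abbrev Behaviour : Type := Fin 2 → Fin 2 → Fin 2 → Fin 2 → ℝ

/-- `P` admits a quantum realisation of local dimension `d`. -/
def HasRealisation (d : ℕ) (P : Behaviour) : Prop :=
  ∃ (ρ : Matrix (Fin d × Fin d) (Fin d × Fin d) ℂ)
    (E F : Fin 2 → Fin 2 → Matrix (Fin d) (Fin d) ℂ),
    ρ.PosSemidef ∧ ρ.trace = 1 ∧
    (∀ x a, (E x a).PosSemidef) ∧ (∀ y b, (F y b).PosSemidef) ∧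
    (∀ x, ∑ a, E x a = 1) ∧ (∀ y, ∑ b, F y b = 1) ∧
    ∀ a b x y, (P a b x y : ℂ) = ((E x a ⊗ₖ F y b) * ρ).trace

def Qfinite : Set Behaviour := {P | ∃ d : ℕ, 0 < d ∧ HasRealisation d P}

def Q : Set Behaviour := closure Qfinite

def detBehaviour (f g : Fin 2 → Fin 2) : Behaviour :=
  fun a b x y => if a = f x ∧ b = g y then 1 else 0

def L : Set Behaviour := convexHull ℝ {P | ∃ f g, P = detBehaviour f g}

def NS : Set Behaviour :=
  {P | (∀ a b x y, 0 ≤ P a b x y) ∧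
       (∀ x y : Fin 2, ∑ a : Fin 2, ∑ b : Fin 2, P a b x y = 1) ∧
       (∀ (a x y y' : Fin 2), ∑ b : Fin 2, P a b x y = ∑ b : Fin 2, P a b x y') ∧
       (∀ (b x x' y : Fin 2), ∑ a : Fin 2, P a b x y = ∑ a : Fin 2, P a b x' y)}

def margA (P : Behaviour) (x : Fin 2) : ℝ :=
  ∑ a : Fin 2, ∑ b : Fin 2, (-1 : ℝ) ^ (a : ℕ) * P a b x 0

def margB (P : Behaviour) (y : Fin 2) : ℝ :=
  ∑ a : Fin 2, ∑ b : Fin 2, (-1 : ℝ) ^ (b : ℕ) * P a b 0 y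

def corr (P : Behaviour) (x y : Fin 2) : ℝ :=
  ∑ a : Fin 2, ∑ b : Fin 2, (-1 : ℝ) ^ ((a : ℕ) + (b : ℕ)) * P a b x y

def chsh (P : Behaviour) : ℝ := corr P 0 0 + corr P 0 1 + corr P 1 0 - corr P 1 1

def bell (B P : Behaviour) : ℝ := ∑ a : Fin 2, ∑ b : Fin 2, ∑ x : Fin 2, ∑ y : Fin 2, B a b x y * P a b x y

noncomputable def beta (B : Behaviour) (S : Set Behaviour) : ℝ := sSup (bell B '' S)

def face (B : Behaviour) (S : Set Behaviour) : Set Behaviour :=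
  {P ∈ S | bell B P = beta B S}

/-- Reconstruct a behaviour from marginals and correlators. -/
noncomputable def fromCorr (mA mB : Fin 2 → ℝ) (c : Fin 2 → Fin 2 → ℝ) : Behaviour :=
  fun a b x y =>
    (1 + (-1 : ℝ) ^ (a : ℕ) * mA x + (-1 : ℝ) ^ (b : ℕ) * mB y
      + (-1 : ℝ) ^ ((a : ℕ) + (b : ℕ)) * c x y) / 4


noncomputable def P0 : Behaviour := fun _ _ _ _ => (1 : ℝ) / 4
lemma fin2cases (i : Fin 2) : i = 0 ∨ i = 1 := by omega

set_option maxHeartbeats 4000000 in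
lemma fine_aux (Q : Behaviour) (A B : Fin 2 → ℝ) (C : Fin 2 → Fin 2 → ℝ)
    (hQ : ∀ a b x y, Q a b x y
      = (1 + (-1 : ℝ) ^ (a : ℕ) * A x + (-1 : ℝ) ^ (b : ℕ) * B y
          + (-1 : ℝ) ^ ((a : ℕ) + (b : ℕ)) * C x y) / 4)
    (hQpos : ∀ a b x y, 0 ≤ Q a b x y)
    (hS1 : |C 0 0 + C 0 1 + C 1 0 - C 1 1| ≤ 2)
    (hS2 : |C 0 0 + C 0 1 - C 1 0 + C 1 1| ≤ 2)
    (hS3 : |C 0 0 - C 0 1 + C 1 0 + C 1 1| ≤ 2)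
    (hS4 : |(-C 0 0) + C 0 1 + C 1 0 + C 1 1| ≤ 2) :
    Q ∈ L := by
  have hp : ∀ a b x y : Fin 2, 0 ≤ 1 + (-1:ℝ)^(a:ℕ) * A x + (-1:ℝ)^(b:ℕ) * B y
      + (-1:ℝ)^((a:ℕ)+(b:ℕ)) * C x y := by
    intro a b x y
    have h := hQpos a b x y
    rw [hQ] at h
    linarith
  obtain ⟨hS1a, hS1b⟩ := abs_le.mp hS1
  obtain ⟨hS2a, hS2b⟩ := abs_le.mp hS2
  obtain ⟨hS3a, hS3b⟩ := abs_le.mp hS3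
  obtain ⟨hS4a, hS4b⟩ := abs_le.mp hS4
  have p0000 : (0:ℝ) ≤ 1 + A 0 + B 0 + C 0 0 := by have h := hp 0 0 0 0; norm_num at h; linarith
  have p0001 : (0:ℝ) ≤ 1 + A 0 + B 1 + C 0 1 := by have h := hp 0 0 0 1; norm_num at h; linarith
  have p0010 : (0:ℝ) ≤ 1 + A 1 + B 0 + C 1 0 := by have h := hp 0 0 1 0; norm_num at h; linarith
  have p0011 : (0:ℝ) ≤ 1 + A 1 + B 1 + C 1 1 := by have h := hp 0 0 1 1; norm_num at h; linarith
  have p0100 : (0:ℝ) ≤ 1 + A 0 - B 0 - C 0 0 := by have h := hp 0 1 0 0; norm_num at h; linarith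
  have p0101 : (0:ℝ) ≤ 1 + A 0 - B 1 - C 0 1 := by have h := hp 0 1 0 1; norm_num at h; linarith
  have p0110 : (0:ℝ) ≤ 1 + A 1 - B 0 - C 1 0 := by have h := hp 0 1 1 0; norm_num at h; linarith
  have p0111 : (0:ℝ) ≤ 1 + A 1 - B 1 - C 1 1 := by have h := hp 0 1 1 1; norm_num at h; linarith
  have p1000 : (0:ℝ) ≤ 1 - A 0 + B 0 - C 0 0 := by have h := hp 1 0 0 0; norm_num at h; linarith
  have p1001 : (0:ℝ) ≤ 1 - A 0 + B 1 - C 0 1 := by have h := hp 1 0 0 1; norm_num at h; linarith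
  have p1010 : (0:ℝ) ≤ 1 - A 1 + B 0 - C 1 0 := by have h := hp 1 0 1 0; norm_num at h; linarith
  have p1011 : (0:ℝ) ≤ 1 - A 1 + B 1 - C 1 1 := by have h := hp 1 0 1 1; norm_num at h; linarith
  have p1100 : (0:ℝ) ≤ 1 - A 0 - B 0 + C 0 0 := by have h := hp 1 1 0 0; norm_num at h; linarith
  have p1101 : (0:ℝ) ≤ 1 - A 0 - B 1 + C 0 1 := by have h := hp 1 1 0 1; norm_num at h; linarith
  have p1110 : (0:ℝ) ≤ 1 - A 1 - B 0 + C 1 0 := by have h := hp 1 1 1 0; norm_num at h; linarith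
  have p1111 : (0:ℝ) ≤ 1 - A 1 - B 1 + C 1 1 := by have h := hp 1 1 1 1; norm_num at h; linarith
  obtain ⟨u, hu⟩ : ∃ u : ℝ, u = max (|A 0 + A 1| - 1) (max (|C 0 0 + C 1 0| - 1) (|C 0 1 + C 1 1| - 1)) :=
    ⟨_, rfl⟩
  have hla1 : -1 - (A 0 + A 1) ≤ u := by rw [hu]; have := neg_abs_le (A 0 + A 1); have := le_max_left (|A 0 + A 1| - 1) (max (|C 0 0 + C 1 0| - 1) (|C 0 1 + C 1 1| - 1)); linarith
  have hla2 : (A 0 + A 1) - 1 ≤ u := by rw [hu]; have := le_abs_self (A 0 + A 1); have := le_max_left (|A 0 + A 1| - 1) (max (|C 0 0 + C 1 0| - 1) (|C 0 1 + C 1 1| - 1)); linarith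
  have hlc1 : -1 - (C 0 0 + C 1 0) ≤ u := by rw [hu]; have := neg_abs_le (C 0 0 + C 1 0); have h2 := le_trans (le_max_left (|C 0 0 + C 1 0| - 1) (|C 0 1 + C 1 1| - 1)) (le_max_right (|A 0 + A 1| - 1) _); linarith
  have hlc2 : (C 0 0 + C 1 0) - 1 ≤ u := by rw [hu]; have := le_abs_self (C 0 0 + C 1 0); have h2 := le_trans (le_max_left (|C 0 0 + C 1 0| - 1) (|C 0 1 + C 1 1| - 1)) (le_max_right (|A 0 + A 1| - 1) _); linarith
  have hlc3 : -1 - (C 0 1 + C 1 1) ≤ u := by rw [hu]; have := neg_abs_le (C 0 1 + C 1 1); have h2 := le_trans (le_max_right (|C 0 0 + C 1 0| - 1) (|C 0 1 + C 1 1| - 1)) (le_max_right (|A 0 + A 1| - 1) _); linarith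
  have hlc4 : (C 0 1 + C 1 1) - 1 ≤ u := by rw [hu]; have := le_abs_self (C 0 1 + C 1 1); have h2 := le_trans (le_max_right (|C 0 0 + C 1 0| - 1) (|C 0 1 + C 1 1| - 1)) (le_max_right (|A 0 + A 1| - 1) _); linarith
  have hub1 : u ≤ 1 + A 0 - A 1 := by
    rw [hu]
    exact max_le (by rcases abs_cases (A 0 + A 1) with ⟨h,h2⟩|⟨h,h2⟩ <;> linarith) (max_le (by rcases abs_cases (C 0 0 + C 1 0) with ⟨h,h2⟩|⟨h,h2⟩ <;> linarith) (by rcases abs_cases (C 0 1 + C 1 1) with ⟨h,h2⟩|⟨h,h2⟩ <;> linarith))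
  have hub2 : u ≤ 1 - A 0 + A 1 := by
    rw [hu]
    exact max_le (by rcases abs_cases (A 0 + A 1) with ⟨h,h2⟩|⟨h,h2⟩ <;> linarith) (max_le (by rcases abs_cases (C 0 0 + C 1 0) with ⟨h,h2⟩|⟨h,h2⟩ <;> linarith) (by rcases abs_cases (C 0 1 + C 1 1) with ⟨h,h2⟩|⟨h,h2⟩ <;> linarith))
  have hub3 : u ≤ 1 - C 0 0 + C 1 0 := by
    rw [hu]
    exact max_le (by rcases abs_cases (A 0 + A 1) with ⟨h,h2⟩|⟨h,h2⟩ <;> linarith) (max_le (by rcases abs_cases (C 0 0 + C 1 0) with ⟨h,h2⟩|⟨h,h2⟩ <;> linarith) (by rcases abs_cases (C 0 1 + C 1 1) with ⟨h,h2⟩|⟨h,h2⟩ <;> linarith))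
  have hub4 : u ≤ 1 + C 0 0 - C 1 0 := by
    rw [hu]
    exact max_le (by rcases abs_cases (A 0 + A 1) with ⟨h,h2⟩|⟨h,h2⟩ <;> linarith) (max_le (by rcases abs_cases (C 0 0 + C 1 0) with ⟨h,h2⟩|⟨h,h2⟩ <;> linarith) (by rcases abs_cases (C 0 1 + C 1 1) with ⟨h,h2⟩|⟨h,h2⟩ <;> linarith))
  have hub5 : u ≤ 1 - C 0 1 + C 1 1 := by
    rw [hu]
    exact max_le (by rcases abs_cases (A 0 + A 1) with ⟨h,h2⟩|⟨h,h2⟩ <;> linarith) (max_le (by rcases abs_cases (C 0 0 + C 1 0) with ⟨h,h2⟩|⟨h,h2⟩ <;> linarith) (by rcases abs_cases (C 0 1 + C 1 1) with ⟨h,h2⟩|⟨h,h2⟩ <;> linarith))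
  have hub6 : u ≤ 1 + C 0 1 - C 1 1 := by
    rw [hu]
    exact max_le (by rcases abs_cases (A 0 + A 1) with ⟨h,h2⟩|⟨h,h2⟩ <;> linarith) (max_le (by rcases abs_cases (C 0 0 + C 1 0) with ⟨h,h2⟩|⟨h,h2⟩ <;> linarith) (by rcases abs_cases (C 0 1 + C 1 1) with ⟨h,h2⟩|⟨h,h2⟩ <;> linarith))
  obtain ⟨e0, he0⟩ : ∃ e : ℝ, e = min (min (1 + A 0 + A 1 - B 0 - C 0 0 - C 1 0 + u) (1 + A 0 - A 1 + B 0 + C 0 0 - C 1 0 - u)) (min (1 - A 0 + A 1 + B 0 - C 0 0 + C 1 0 - u) (1 - A 0 - A 1 - B 0 + C 0 0 + C 1 0 + u)) := ⟨_, rfl⟩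
  have he0u1 : e0 ≤ 1 + A 0 + A 1 - B 0 - C 0 0 - C 1 0 + u := by rw [he0]; exact le_trans (min_le_left _ _) (min_le_left _ _)
  have he0u2 : e0 ≤ 1 + A 0 - A 1 + B 0 + C 0 0 - C 1 0 - u := by rw [he0]; exact le_trans (min_le_left _ _) (min_le_right _ _)
  have he0u3 : e0 ≤ 1 - A 0 + A 1 + B 0 - C 0 0 + C 1 0 - u := by rw [he0]; exact le_trans (min_le_right _ _) (min_le_left _ _)
  have he0u4 : e0 ≤ 1 - A 0 - A 1 - B 0 + C 0 0 + C 1 0 + u := by rw [he0]; exact le_trans (min_le_right _ _) (min_le_right _ _)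
  have he0l1 : -(1 + A 0 + A 1 + B 0 + C 0 0 + C 1 0 + u) ≤ e0 := by
    rw [he0]
    exact le_min (le_min (by linarith) (by linarith)) (le_min (by linarith) (by linarith))
  have he0l2 : -(1 + A 0 - A 1 - B 0 - C 0 0 + C 1 0 - u) ≤ e0 := by
    rw [he0]
    exact le_min (le_min (by linarith) (by linarith)) (le_min (by linarith) (by linarith))
  have he0l3 : -(1 - A 0 + A 1 - B 0 + C 0 0 - C 1 0 - u) ≤ e0 := by
    rw [he0]
    exact le_min (le_min (by linarith) (by linarith)) (le_min (by linarith) (by linarith))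
  have he0l4 : -(1 - A 0 - A 1 + B 0 - C 0 0 - C 1 0 + u) ≤ e0 := by
    rw [he0]
    exact le_min (le_min (by linarith) (by linarith)) (le_min (by linarith) (by linarith))
  obtain ⟨e1, he1⟩ : ∃ e : ℝ, e = min (min (1 + A 0 + A 1 - B 1 - C 0 1 - C 1 1 + u) (1 + A 0 - A 1 + B 1 + C 0 1 - C 1 1 - u)) (min (1 - A 0 + A 1 + B 1 - C 0 1 + C 1 1 - u) (1 - A 0 - A 1 - B 1 + C 0 1 + C 1 1 + u)) := ⟨_, rfl⟩
  have he1u1 : e1 ≤ 1 + A 0 + A 1 - B 1 - C 0 1 - C 1 1 + u := by rw [he1]; exact le_trans (min_le_left _ _) (min_le_left _ _)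
  have he1u2 : e1 ≤ 1 + A 0 - A 1 + B 1 + C 0 1 - C 1 1 - u := by rw [he1]; exact le_trans (min_le_left _ _) (min_le_right _ _)
  have he1u3 : e1 ≤ 1 - A 0 + A 1 + B 1 - C 0 1 + C 1 1 - u := by rw [he1]; exact le_trans (min_le_right _ _) (min_le_left _ _)
  have he1u4 : e1 ≤ 1 - A 0 - A 1 - B 1 + C 0 1 + C 1 1 + u := by rw [he1]; exact le_trans (min_le_right _ _) (min_le_right _ _)
  have he1l1 : -(1 + A 0 + A 1 + B 1 + C 0 1 + C 1 1 + u) ≤ e1 := by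
    rw [he1]
    exact le_min (le_min (by linarith) (by linarith)) (le_min (by linarith) (by linarith))
  have he1l2 : -(1 + A 0 - A 1 - B 1 - C 0 1 + C 1 1 - u) ≤ e1 := by
    rw [he1]
    exact le_min (le_min (by linarith) (by linarith)) (le_min (by linarith) (by linarith))
  have he1l3 : -(1 - A 0 + A 1 - B 1 + C 0 1 - C 1 1 - u) ≤ e1 := by
    rw [he1]
    exact le_min (le_min (by linarith) (by linarith)) (le_min (by linarith) (by linarith))
  have he1l4 : -(1 - A 0 - A 1 + B 1 - C 0 1 - C 1 1 + u) ≤ e1 := by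
    rw [he1]
    exact le_min (le_min (by linarith) (by linarith)) (le_min (by linarith) (by linarith))
  obtain ⟨t1, ht1⟩ : ∃ t : Fin 2 → Fin 2 → Fin 2 → ℝ, ∀ i j k, t i j k = (1 + A 0 * (-1:ℝ)^((i:Fin 2):ℕ) + A 1 * (-1:ℝ)^((j:Fin 2):ℕ) + B 0 * (-1:ℝ)^((k:Fin 2):ℕ) + C 0 0 * ((-1:ℝ)^((i:Fin 2):ℕ) * (-1:ℝ)^((k:Fin 2):ℕ)) + C 1 0 * ((-1:ℝ)^((j:Fin 2):ℕ) * (-1:ℝ)^((k:Fin 2):ℕ)) + u * ((-1:ℝ)^((i:Fin 2):ℕ) * (-1:ℝ)^((j:Fin 2):ℕ)) + e0 * ((-1:ℝ)^((i:Fin 2):ℕ) * (-1:ℝ)^((j:Fin 2):ℕ) * (-1:ℝ)^((k:Fin 2):ℕ))) / 8 := ⟨fun i j k => (1 + A 0 * (-1:ℝ)^((i:Fin 2):ℕ) + A 1 * (-1:ℝ)^((j:Fin 2):ℕ) + B 0 * (-1:ℝ)^((k:Fin 2):ℕ) + C 0 0 * ((-1:ℝ)^((i:Fin 2):ℕ)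 * (-1:ℝ)^((k:Fin 2):ℕ)) + C 1 0 * ((-1:ℝ)^((j:Fin 2):ℕ) * (-1:ℝ)^((k:Fin 2):ℕ)) + u * ((-1:ℝ)^((i:Fin 2):ℕ) * (-1:ℝ)^((j:Fin 2):ℕ)) + e0 * ((-1:ℝ)^((i:Fin 2):ℕ) * (-1:ℝ)^((j:Fin 2):ℕ) * (-1:ℝ)^((k:Fin 2):ℕ))) / 8, fun _ _ _ => rfl⟩
  obtain ⟨t2, ht2⟩ : ∃ t : Fin 2 → Fin 2 → Fin 2 → ℝ, ∀ i j k, t i j k = (1 + A 0 * (-1:ℝ)^((i:Fin 2):ℕ) + A 1 * (-1:ℝ)^((j:Fin 2):ℕ) + B 1 * (-1:ℝ)^((k:Fin 2):ℕ) + C 0 1 * ((-1:ℝ)^((i:Fin 2):ℕ) * (-1:ℝ)^((k:Fin 2):ℕ)) + C 1 1 * ((-1:ℝ)^((j:Fin 2):ℕ) * (-1:ℝ)^((k:Fin 2):ℕ)) + u * ((-1:ℝ)^((i:Fin 2):ℕ) * (-1:ℝ)^((j:Fin 2):ℕ)) + e1 * ((-1:ℝ)^((i:Fin 2):ℕ)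 * (-1:ℝ)^((j:Fin 2):ℕ) * (-1:ℝ)^((k:Fin 2):ℕ))) / 8 := ⟨fun i j k => (1 + A 0 * (-1:ℝ)^((i:Fin 2):ℕ) + A 1 * (-1:ℝ)^((j:Fin 2):ℕ) + B 1 * (-1:ℝ)^((k:Fin 2):ℕ) + C 0 1 * ((-1:ℝ)^((i:Fin 2):ℕ) * (-1:ℝ)^((k:Fin 2):ℕ)) + C 1 1 * ((-1:ℝ)^((j:Fin 2):ℕ) * (-1:ℝ)^((k:Fin 2):ℕ)) + u * ((-1:ℝ)^((i:Fin 2):ℕ) * (-1:ℝ)^((j:Fin 2):ℕ)) + e1 * ((-1:ℝ)^((i:Fin 2):ℕ) * (-1:ℝ)^((j:Fin 2):ℕ) * (-1:ℝ)^((k:Fin 2):ℕ))) / 8, fun _ _ _ => rfl⟩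
  obtain ⟨jw, hjw⟩ : ∃ t : Fin 2 → Fin 2 → ℝ, ∀ i j, t i j = (1 + A 0 * (-1:ℝ)^((i:Fin 2):ℕ) + A 1 * (-1:ℝ)^((j:Fin 2):ℕ) + u * ((-1:ℝ)^((i:Fin 2):ℕ) * (-1:ℝ)^((j:Fin 2):ℕ))) / 4 := ⟨fun i j => (1 + A 0 * (-1:ℝ)^((i:Fin 2):ℕ) + A 1 * (-1:ℝ)^((j:Fin 2):ℕ) + u * ((-1:ℝ)^((i:Fin 2):ℕ) * (-1:ℝ)^((j:Fin 2):ℕ))) / 4, fun _ _ => rfl⟩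
  have ht1pos : ∀ i j k, 0 ≤ t1 i j k := by
    intro i j k
    rw [ht1]
    fin_cases i <;> fin_cases j <;> fin_cases k <;> norm_num <;> linarith
  have ht2pos : ∀ i j k, 0 ≤ t2 i j k := by
    intro i j k
    rw [ht2]
    fin_cases i <;> fin_cases j <;> fin_cases k <;> norm_num <;> linarith
  have hJt1 : ∀ i j, jw i j = t1 i j 0 + t1 i j 1 := by
    intro i j
    rw [hjw, ht1, ht1]
    norm_num
    ring
  have hJt2 : ∀ i j, jw i j = t2 i j 0 + t2 i j 1 := by
    intro i j
    rw [hjw, ht2, ht2]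
    norm_num
    ring
  obtain ⟨w, hw00, hw01, hw10, hw11⟩ :
      ∃ w : (Fin 2 × Fin 2) × (Fin 2 × Fin 2) → ℝ,
        (∀ i j, w ((i,j),(0,0)) = min (t1 i j 0) (t2 i j 0)) ∧
        (∀ i j, w ((i,j),(0,1)) = t1 i j 0 - min (t1 i j 0) (t2 i j 0)) ∧
        (∀ i j, w ((i,j),(1,0)) = t2 i j 0 - min (t1 i j 0) (t2 i j 0)) ∧
        (∀ i j, w ((i,j),(1,1)) = jw i j - t1 i j 0 - t2 i j 0 + min (t1 i j 0) (t2 i j 0)) := by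
    refine ⟨fun p => if p.2.1 = 0 then (if p.2.2 = 0 then min (t1 p.1.1 p.1.2 0) (t2 p.1.1 p.1.2 0)
        else t1 p.1.1 p.1.2 0 - min (t1 p.1.1 p.1.2 0) (t2 p.1.1 p.1.2 0))
      else (if p.2.2 = 0 then t2 p.1.1 p.1.2 0 - min (t1 p.1.1 p.1.2 0) (t2 p.1.1 p.1.2 0)
        else jw p.1.1 p.1.2 - t1 p.1.1 p.1.2 0 - t2 p.1.1 p.1.2 0 + min (t1 p.1.1 p.1.2 0) (t2 p.1.1 p.1.2 0)),
      fun i j => by norm_num, fun i j => by norm_num, fun i j => by norm_num, fun i j => by norm_num⟩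
  have hwpos : ∀ p, 0 ≤ w p := by
    rintro ⟨⟨i,j⟩,⟨k,l⟩⟩
    rcases fin2cases k with rfl | rfl <;> rcases fin2cases l with rfl | rfl
    · rw [hw00]; exact le_min (ht1pos i j 0) (ht2pos i j 0)
    · rw [hw01]; have := min_le_left (t1 i j 0) (t2 i j 0); linarith
    · rw [hw10]; have := min_le_right (t1 i j 0) (t2 i j 0); linarith
    · rw [hw11]
      rcases le_total (t1 i j 0) (t2 i j 0) with h | h
      · rw [min_eq_left h]; have h2 := ht2pos i j 1; have h3 := hJt2 i j; linarith
      · rw [min_eq_right h]; have h2 := ht1pos i j 1; have h3 := hJt1 i j; linarith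
  have hsum : ∑ p : (Fin 2 × Fin 2) × (Fin 2 × Fin 2), w p = 1 := by
    simp only [Fintype.sum_prod_type, Fin.sum_univ_two, hw00, hw01, hw10, hw11, hjw]
    norm_num
    ring_nf
  have hmem : ∀ p : (Fin 2 × Fin 2) × (Fin 2 × Fin 2),
      detBehaviour (fun x => if x = 0 then p.1.1 else p.1.2) (fun y => if y = 0 then p.2.1 else p.2.2)
        ∈ {P : Behaviour | ∃ f g, P = detBehaviour f g} := fun p => ⟨_, _, rfl⟩
  have hQeq : Finset.univ.centerMass w
      (fun p : (Fin 2 × Fin 2) × (Fin 2 × Fin 2) =>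
        detBehaviour (fun x => if x = 0 then p.1.1 else p.1.2) (fun y => if y = 0 then p.2.1 else p.2.2)) = Q := by
    rw [Finset.centerMass, hsum, inv_one, one_smul]
    funext a b x y
    have hq := hQ a b x y
    simp only [Finset.sum_apply, Pi.smul_apply, smul_eq_mul, detBehaviour]
    rcases fin2cases a with rfl | rfl <;> rcases fin2cases b with rfl | rfl <;>
      rcases fin2cases x with rfl | rfl <;> rcases fin2cases y with rfl | rfl <;>
      simp only [Fintype.sum_prod_type, Fin.sum_univ_two, hw00, hw01, hw10, hw11] <;>
      norm_num [hq] <;>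
      simp only [hjw, ht1, ht2] <;> norm_num <;> ring_nf <;> norm_num
  rw [← hQeq]
  exact Finset.centerMass_mem_convexHull _ (fun p _ => hwpos p) (by rw [hsum]; norm_num) (fun p _ => hmem p)

lemma ns_rep (P : Behaviour) (hP : P ∈ NS) :
    ∀ a b x y, P a b x y
      = (1 + (-1 : ℝ) ^ (a : ℕ) * margA P x + (-1 : ℝ) ^ (b : ℕ) * margB P y
          + (-1 : ℝ) ^ ((a : ℕ) + (b : ℕ)) * corr P x y) / 4 := by
  obtain ⟨hpos, hnorm, hA, hB⟩ := hP
  intro a b x y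
  have hn := hnorm x y
  have hA0 := hA 0 x y 0
  have hA1 := hA 1 x y 0
  have hB0 := hB 0 x 0 y
  have hB1 := hB 1 x 0 y
  simp only [margA, margB, corr, Fin.sum_univ_two] at *
  fin_cases a <;> fin_cases b <;> norm_num <;> linarith

lemma corr_abs_le (P : Behaviour) (hP : P ∈ NS) (x y : Fin 2) : |corr P x y| ≤ 1 := by
  obtain ⟨hpos, hnorm, hA, hB⟩ := hP
  have hn := hnorm x y
  simp only [Fin.sum_univ_two] at hn
  have h00 := hpos 0 0 x y
  have h01 := hpos 0 1 x y
  have h10 := hpos 1 0 x y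
  have h11 := hpos 1 1 x y
  rw [abs_le]
  constructor <;> · simp only [corr, Fin.sum_univ_two]; norm_num; linarith

lemma chsh_det_le (f g : Fin 2 → Fin 2) : chsh (detBehaviour f g) ≤ 2 := by
  simp only [chsh, corr, detBehaviour, Fin.sum_univ_two]
  rcases fin2cases (f 0) with h1 | h1 <;> rcases fin2cases (f 1) with h2 | h2 <;>
    rcases fin2cases (g 0) with h3 | h3 <;> rcases fin2cases (g 1) with h4 | h4 <;>
    simp [h1, h2, h3, h4] <;> norm_num

lemma chsh_L_le (P : Behaviour) (hP : P ∈ L) : chsh P ≤ 2 := by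
  have hconv : Convex ℝ {X : Behaviour | chsh X ≤ 2} := by
    have hlin : IsLinearMap ℝ chsh := by
      constructor <;> intro x y <;>
        simp [chsh, corr, Fin.sum_univ_two, Pi.add_apply, Pi.smul_apply, smul_eq_mul] <;> ring
    exact convex_halfSpace_le hlin 2
  refine convexHull_min ?_ hconv hP
  rintro X ⟨f, g, rfl⟩
  exact chsh_det_le f g

lemma corr_mix (P : Behaviour) (l : ℝ) (x y : Fin 2) :
    corr ((1 - l) • P + l • P0) x y = (1 - l) * corr P x y := by
  simp [corr, Fin.sum_univ_two, P0, Pi.add_apply, Pi.smul_apply, smul_eq_mul]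
  ring

lemma chsh_mix (P : Behaviour) (l : ℝ) :
    chsh ((1 - l) • P + l • P0) = (1 - l) * chsh P := by
  simp only [chsh, corr_mix]
  ring

lemma mix_NS (P : Behaviour) (hP : P ∈ NS) (l : ℝ) (h0 : 0 ≤ l) (h1 : l ≤ 1) :
    (1 - l) • P + l • P0 ∈ NS := by
  obtain ⟨hpos, hnorm, hA, hB⟩ := hP
  refine ⟨?_, ?_, ?_, ?_⟩
  · intro a b x y
    have := hpos a b x y
    simp only [Pi.add_apply, Pi.smul_apply, smul_eq_mul, P0]
    nlinarith
  · intro x y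
    have := hnorm x y
    simp only [Fin.sum_univ_two, Pi.add_apply, Pi.smul_apply, smul_eq_mul, P0] at *
    linear_combination (1 - l) * this
  · intro a x y y'
    have := hA a x y y'
    simp only [Fin.sum_univ_two, Pi.add_apply, Pi.smul_apply, smul_eq_mul, P0] at *
    linear_combination (1 - l) * this
  · intro b x x' y
    have := hB b x x' y
    simp only [Fin.sum_univ_two, Pi.add_apply, Pi.smul_apply, smul_eq_mul, P0] at *
    linear_combination (1 - l) * this

/-- **Visibility against white noise.** For a no-signalling behaviour with CHSH
value `β > 2`, the critical visibility against white noise equals `(β − 2)/β`. -/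
theorem visibility_white_noise (P : Behaviour) (hP : P ∈ NS) (hbeta : 2 < chsh P) :
    sInf {l : ℝ | l ∈ Set.Icc (0 : ℝ) 1 ∧ (1 - l) • P + l • P0 ∈ L}
      = (chsh P - 2) / chsh P := by
  set β := chsh P with hβ
  have hβpos : 0 < β := by linarith
  set lstar : ℝ := (β - 2) / β with hlstar
  have hl0 : 0 ≤ lstar := by rw [hlstar]; apply div_nonneg <;> linarith
  have hl1 : lstar ≤ 1 := by rw [hlstar, div_le_one hβpos]; linarith
  have h1l : 1 - lstar = 2 / β := by rw [hlstar]; field_simp; ring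
  -- the mixture at lstar is local
  have hmix : (1 - lstar) • P + lstar • P0 ∈ L := by
    set Qm : Behaviour := (1 - lstar) • P + lstar • P0 with hQm
    have hQmNS : Qm ∈ NS := mix_NS P hP lstar hl0 hl1
    have hc : ∀ x y, corr Qm x y = 2 / β * corr P x y := by
      intro x y; rw [hQm, corr_mix, h1l]
    have hcb : ∀ x y : Fin 2, |corr P x y| ≤ 1 := corr_abs_le P hP
    have hc00 := abs_le.mp (hcb 0 0)
    have hc01 := abs_le.mp (hcb 0 1)
    have hc10 := abs_le.mp (hcb 1 0)
    have hc11 := abs_le.mp (hcb 1 1)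
    have hchsh : corr P 0 0 + corr P 0 1 + corr P 1 0 - corr P 1 1 = β := rfl
    have key : ∀ s : ℝ, |s| ≤ 4 - β → |2 / β * s| ≤ 2 := by
      intro s hs
      rw [abs_mul, abs_of_pos (by positivity : (0:ℝ) < 2 / β), div_mul_eq_mul_div,
        div_le_iff₀ hβpos]
      have := abs_nonneg s
      nlinarith
    apply fine_aux Qm (margA Qm) (margB Qm) (corr Qm) (ns_rep Qm hQmNS) hQmNS.1
    · rw [hc, hc, hc, hc]
      rw [show 2 / β * corr P 0 0 + 2 / β * corr P 0 1 + 2 / β * corr P 1 0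
          - 2 / β * corr P 1 1 = 2 / β * β by rw [← hchsh]; ring]
      rw [show 2 / β * β = (2:ℝ) from div_mul_cancel₀ 2 (ne_of_gt hβpos)]
      norm_num
    · rw [hc, hc, hc, hc]
      rw [show 2 / β * corr P 0 0 + 2 / β * corr P 0 1 - 2 / β * corr P 1 0
          + 2 / β * corr P 1 1 = 2 / β * (corr P 0 0 + corr P 0 1 - corr P 1 0 + corr P 1 1) by ring]
      exact key _ (abs_le.mpr ⟨by linarith, by linarith⟩)
    · rw [hc, hc, hc, hc]
      rw [show 2 / β * corr P 0 0 - 2 / β * corr P 0 1 + 2 / β * corr P 1 0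
          + 2 / β * corr P 1 1 = 2 / β * (corr P 0 0 - corr P 0 1 + corr P 1 0 + corr P 1 1) by ring]
      exact key _ (abs_le.mpr ⟨by linarith, by linarith⟩)
    · rw [hc, hc, hc, hc]
      rw [show -(2 / β * corr P 0 0) + 2 / β * corr P 0 1 + 2 / β * corr P 1 0
          + 2 / β * corr P 1 1 = 2 / β * (-corr P 0 0 + corr P 0 1 + corr P 1 0 + corr P 1 1) by ring]
      exact key _ (abs_le.mpr ⟨by linarith, by linarith⟩)
  have hmemstar : lstar ∈ {l : ℝ | l ∈ Set.Icc (0 : ℝ) 1 ∧ (1 - l) • P + l • P0 ∈ L} :=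
    ⟨⟨hl0, hl1⟩, hmix⟩
  have hlb : ∀ l ∈ {l : ℝ | l ∈ Set.Icc (0 : ℝ) 1 ∧ (1 - l) • P + l • P0 ∈ L}, lstar ≤ l := by
    rintro l ⟨hl, hmem⟩
    have h2 : chsh ((1 - l) • P + l • P0) ≤ 2 := chsh_L_le _ hmem
    rw [chsh_mix] at h2
    rw [hlstar, div_le_iff₀ hβpos]
    nlinarith
  exact le_antisymm (csInf_le ⟨lstar, hlb⟩ hmemstar) (le_csInf ⟨lstar, hmemstar⟩ hlb)
end

section
/- Every quantum behaviour P ∈ Q in the (2,2,2,2) Bell scenario with ⟨A₁B₁⟩ = −1 satisfies the cubic inequality 2⟨A₀B₀⟩·⟨A₀B₁⟩·⟨A₁B₀⟩ + ⟨A₀B₀⟩² + ⟨A₀B₁⟩² + ⟨A₁B₀⟩² ≤ 1. -/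
open Matrix Kronecker ComplexOrder BigOperators

open scoped MatrixOrder

set_option maxHeartbeats 1600000
set_option linter.unusedSectionVars false





section Abstract
open RealInnerProductSpace
variable {V : Type*} [NormedAddCommGroup V] [InnerProductSpace ℝ V]

/-- Three-vector Gram inequality. -/
lemma gram_cubic (u v w : V) (hu : ⟪u, u⟫ ≤ 1) (hv : ⟪v, v⟫ ≤ 1)
    (hw : ⟪w, w⟫ ≤ 1) (hw0 : 0 < ⟪w, w⟫) :
    ⟪u, v⟫ ^ 2 + ⟪u, w⟫ ^ 2 + ⟪v, w⟫ ^ 2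
      - 2 * (⟪u, v⟫ * ⟪u, w⟫ * ⟪v, w⟫) ≤ 1 := by
  set γ := ⟪w, w⟫ with hγdef
  set α := ⟪u, u⟫ with hα
  set β := ⟪v, v⟫ with hβ
  set p := ⟪u, v⟫ with hp
  set q := ⟪u, w⟫ with hq
  set r := ⟪v, w⟫ with hr
  have cwv : ⟪w, v⟫ = r := by rw [real_inner_comm v w]
  have cwu : ⟪w, u⟫ = q := by rw [real_inner_comm u w]
  have cvu : ⟪v, u⟫ = p := by rw [real_inner_comm u v]
  set u' := γ • u - q • w with hu'
  set v' := γ • v - r • w with hv'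
  have h1 : ⟪u', v'⟫ = γ * (γ * p - q * r) := by
    rw [hu', hv']
    simp only [inner_sub_left, inner_sub_right, real_inner_smul_left, real_inner_smul_right,
      cwv, cwu, cvu, ← hp, ← hq, ← hr, ← hγdef, ← hα, ← hβ]
    ring
  have h2 : ⟪u', u'⟫ = γ * (γ * α - q ^ 2) := by
    rw [hu']
    simp only [inner_sub_left, inner_sub_right, real_inner_smul_left, real_inner_smul_right,
      cwv, cwu, cvu, ← hp, ← hq, ← hr, ← hγdef, ← hα, ← hβ]
    ring
  have h3 : ⟪v', v'⟫ = γ * (γ * β - r ^ 2) := by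
    rw [hv']
    simp only [inner_sub_left, inner_sub_right, real_inner_smul_left, real_inner_smul_right,
      cwv, cwu, cvu, ← hp, ← hq, ← hr, ← hγdef, ← hα, ← hβ]
    ring
  have hcs : ⟪u', v'⟫ * ⟪u', v'⟫ ≤ ⟪u', u'⟫ * ⟪v', v'⟫ :=
    real_inner_mul_inner_self_le _ _
  have hnn2 : (0:ℝ) ≤ γ * (γ * α - q ^ 2) := h2 ▸ real_inner_self_nonneg
  have hnn3 : (0:ℝ) ≤ γ * (γ * β - r ^ 2) := h3 ▸ real_inner_self_nonneg
  rw [h1, h2, h3] at hcs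
  have hγ2 : (0:ℝ) < γ ^ 2 := pow_pos hw0 2
  have hq2 : (0:ℝ) ≤ γ * α - q ^ 2 := by nlinarith [hnn2, hw0]
  have hr2 : (0:ℝ) ≤ γ * β - r ^ 2 := by nlinarith [hnn3, hw0]
  have hα0 : 0 ≤ α := hα ▸ real_inner_self_nonneg
  have hβ0 : 0 ≤ β := hβ ▸ real_inner_self_nonneg
  have hp1 : p ^ 2 ≤ 1 := by
    have := real_inner_mul_inner_self_le u v
    rw [← hp, ← hα, ← hβ] at this
    nlinarith
  have hcs' : (γ * p - q * r) ^ 2 ≤ (γ * α - q ^ 2) * (γ * β - r ^ 2) := by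
    refine le_of_mul_le_mul_left ?_ hγ2
    calc γ ^ 2 * (γ * p - q * r) ^ 2
        = (γ * (γ * p - q * r)) * (γ * (γ * p - q * r)) := by ring
      _ ≤ (γ * (γ * α - q ^ 2)) * (γ * (γ * β - r ^ 2)) := hcs
      _ = γ ^ 2 * ((γ * α - q ^ 2) * (γ * β - r ^ 2)) := by ring
  have step1 : (γ * p - q * r) ^ 2 ≤ (γ - q ^ 2) * (γ - r ^ 2) := by
    have e1 : γ * α - q ^ 2 ≤ γ - q ^ 2 := by nlinarith
    have e2 : γ * β - r ^ 2 ≤ γ - r ^ 2 := by nlinarith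
    calc (γ * p - q * r) ^ 2 ≤ (γ * α - q ^ 2) * (γ * β - r ^ 2) := hcs'
      _ ≤ (γ - q ^ 2) * (γ - r ^ 2) := mul_le_mul e1 e2 hr2 (by nlinarith)
  have step3' : γ * (γ * p ^ 2 + q ^ 2 + r ^ 2 - 2 * (p * q * r)) ≤ γ * γ := by
    nlinarith [step1]
  have step3 : γ * p ^ 2 + q ^ 2 + r ^ 2 - 2 * (p * q * r) ≤ γ :=
    le_of_mul_le_mul_left step3' hw0
  nlinarith [step3, mul_nonneg (sub_nonneg.2 hw) (sub_nonneg.2 hp1)]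
end Abstract

section Abstract2
open RealInnerProductSpace
variable {V : Type*} [NormedAddCommGroup V] [InnerProductSpace ℝ V]

/-- Perturbed version with approximate anti-correlation. -/
lemma gram_cubic_pert (u v w z : V) (hu : ⟪u, u⟫ ≤ 1) (hv : ⟪v, v⟫ ≤ 1)
    (hw : ⟪w, w⟫ ≤ 1) (hz : ⟪z, z⟫ ≤ 1) :
    ⟪u, v⟫ ^ 2 + ⟪u, w⟫ ^ 2 + ⟪z, v⟫ ^ 2
      + 2 * (⟪u, v⟫ * ⟪u, w⟫ * ⟪z, v⟫)
      ≤ 1 + 2 * (1 + ⟪z, w⟫) + 4 * Real.sqrt (2 * (1 + ⟪z, w⟫)) := by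
  set ε := 1 + ⟪z, w⟫ with hε
  have huu : (0:ℝ) ≤ ⟪u, u⟫ := real_inner_self_nonneg
  have hvv : (0:ℝ) ≤ ⟪v, v⟫ := real_inner_self_nonneg
  have hww : (0:ℝ) ≤ ⟪w, w⟫ := real_inner_self_nonneg
  have hzz : (0:ℝ) ≤ ⟪z, z⟫ := real_inner_self_nonneg
  have hp1 : ⟪u, v⟫ ^ 2 ≤ 1 := by
    nlinarith [real_inner_mul_inner_self_le u v]
  have hq1 : ⟪u, w⟫ ^ 2 ≤ 1 := by
    nlinarith [real_inner_mul_inner_self_le u w]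
  have hc1 : ⟪z, v⟫ ^ 2 ≤ 1 := by
    nlinarith [real_inner_mul_inner_self_le z v]
  have hzw1 : ⟪z, w⟫ ^ 2 ≤ 1 := by
    nlinarith [real_inner_mul_inner_self_le z w]
  have hε0 : 0 ≤ ε := by nlinarith [hzw1, sq_nonneg (1 + ⟪z, w⟫)]
  have hS0 : (0:ℝ) ≤ Real.sqrt (2 * ε) := Real.sqrt_nonneg _
  rcases le_or_gt 1 ε with hεbig | hεsmall
  · have hsq : (1:ℝ) ≤ Real.sqrt (2 * ε) := Real.one_le_sqrt.2 (by linarith)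
    nlinarith [hp1, hq1, hc1, sq_nonneg (⟪u, v⟫ * ⟪u, w⟫ - ⟪z, v⟫),
      mul_nonneg (sub_nonneg.2 hp1) (sub_nonneg.2 hq1)]
  · have hw0 : 0 < ⟪w, w⟫ := by
      rcases lt_or_ge 0 (⟪w, w⟫ : ℝ) with h | h
      · exact h
      · exfalso
        have hw00 : (⟪w, w⟫ : ℝ) = 0 := le_antisymm h hww
        have hwz : ⟪z, w⟫ * ⟪z, w⟫ ≤ 0 := by
          have := real_inner_mul_inner_self_le z w
          nlinarith
        nlinarith [sq_nonneg (⟪z, w⟫ : ℝ)]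
    have hA := gram_cubic u v w hu hv hw hw0
    set p := ⟪u, v⟫ with hpdef
    set q := ⟪u, w⟫ with hqdef
    set r := ⟪v, w⟫ with hrdef
    set d := ⟪z + w, v⟫ with hd
    have hcval : ⟪z, v⟫ = d - r := by
      rw [hd, inner_add_left, real_inner_comm v w, ← hrdef]
      ring
    have hzw2 : ⟪z + w, z + w⟫ ≤ 2 * ε := by
      rw [real_inner_add_add_self]
      nlinarith
    have hd2 : d ^ 2 ≤ 2 * ε := by
      have := real_inner_mul_inner_self_le (z + w) v
      nlinarith [real_inner_self_nonneg (x := z + w)]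
    set S := Real.sqrt (2 * ε) with hS
    have hdS : |d| ≤ S := by
      rw [hS, ← Real.sqrt_sq_eq_abs]
      exact Real.sqrt_le_sqrt hd2
    have hdS1 : d ≤ S := (abs_le.1 hdS).2
    have hdS2 : -S ≤ d := (abs_le.1 hdS).1
    have hr1 : r ^ 2 ≤ 1 := by
      nlinarith [real_inner_mul_inner_self_le v w]
    have hpq2 : p * q - r ≤ 2 := by
      nlinarith [mul_nonneg (sub_nonneg.2 hp1) (sub_nonneg.2 hq1), sq_nonneg (p * q)]
    have hpq2' : -2 ≤ p * q - r := by
      nlinarith [mul_nonneg (sub_nonneg.2 hp1) (sub_nonneg.2 hq1), sq_nonneg (p * q)]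
    have key : d * (p * q - r) ≤ 2 * S := by
      nlinarith [mul_nonneg (sub_nonneg.2 hdS1) (by linarith : (0:ℝ) ≤ 2 + (p * q - r)),
        mul_nonneg (by linarith : (0:ℝ) ≤ S + d) (by linarith : (0:ℝ) ≤ 2 - (p * q - r))]
    rw [hcval]
    nlinarith [hA, hd2, key]
end Abstract2





section HS
variable {n : Type*} [Fintype n] [DecidableEq n]

/-- View a matrix as a vector in Euclidean space (Hilbert–Schmidt). -/
noncomputable def toE (X : Matrix n n ℂ) : EuclideanSpace ℂ (n × n) :=
  (WithLp.equiv 2 _).symm (fun p => X p.1 p.2)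

lemma inner_toE (X Y : Matrix n n ℂ) :
    (inner ℂ (toE X) (toE Y) : ℂ) = (Xᴴ * Y).trace := by
  simp only [toE, PiLp.inner_apply, WithLp.equiv_symm_apply, PiLp.toLp_apply, RCLike.inner_apply,
    Matrix.trace, Matrix.diag, Matrix.mul_apply, Matrix.conjTranspose_apply]
  rw [Fintype.sum_prod_type]
  rw [Finset.sum_comm]
  exact Finset.sum_congr rfl fun _ _ => Finset.sum_congr rfl fun _ _ => mul_comm _ _
end HS

section Kron
variable {m n : Type*}

lemma kron_conjT (M : Matrix m m ℂ) (N : Matrix n n ℂ) :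
    (M ⊗ₖ N)ᴴ = Mᴴ ⊗ₖ Nᴴ := by
  ext ⟨i, j⟩ ⟨k, l⟩
  simp [Matrix.conjTranspose_apply, Matrix.kroneckerMap_apply, _root_.map_mul]

lemma sub_kron (M M' : Matrix m m ℂ) (N : Matrix n n ℂ) :
    (M - M') ⊗ₖ N = M ⊗ₖ N - M' ⊗ₖ N := by
  ext ⟨i, j⟩ ⟨k, l⟩
  simp [Matrix.kroneckerMap_apply, sub_mul]

lemma kron_sub (M : Matrix m m ℂ) (N N' : Matrix n n ℂ) :
    M ⊗ₖ (N - N') = M ⊗ₖ N - M ⊗ₖ N' := by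
  ext ⟨i, j⟩ ⟨k, l⟩
  simp [Matrix.kroneckerMap_apply, mul_sub]
end Kron

section OpAux
variable {n : Type*} [Fintype n] [DecidableEq n]

/-- `1 - (E₀ - E₁)² = Dᴴ D` for a binary POVM. -/
lemma one_sub_sq {E0 E1 : Matrix n n ℂ} (h0 : E0.PosSemidef) (h1 : E1.PosSemidef)
    (hsum : E0 + E1 = 1) :
    ∃ D : Matrix n n ℂ, 1 - (E0 - E1) * (E0 - E1) = Dᴴ * D := by
  set G0 := CFC.sqrt E0 with hG0
  set G1 := CFC.sqrt E1 with hG1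
  have e0 : G0ᴴ = G0 := (CFC.sqrt_nonneg E0).posSemidef.isHermitian
  have e1 : G1ᴴ = G1 := (CFC.sqrt_nonneg E1).posSemidef.isHermitian
  have m0 : G0 * G0 = E0 := CFC.sqrt_mul_sqrt_self E0 h0.nonneg
  have m1 : G1 * G1 = E1 := CFC.sqrt_mul_sqrt_self E1 h1.nonneg
  refine ⟨G1 * G0 + G1 * G0, ?_⟩
  have hDH : (G1 * G0 + G1 * G0)ᴴ = G0 * G1 + G0 * G1 := by
    simp [Matrix.conjTranspose_add, Matrix.conjTranspose_mul, e0, e1]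
  rw [hDH]
  have expand : (G0 * G1 + G0 * G1) * (G1 * G0 + G1 * G0)
      = G0 * (G1 * G1) * G0 + G0 * (G1 * G1) * G0
        + G0 * (G1 * G1) * G0 + G0 * (G1 * G1) * G0 := by
    noncomm_ring
  rw [expand, m1]
  have h10 : E1 = 1 - E0 := by rw [← hsum]; abel
  rw [h10, ← m0]
  noncomm_ring

/-- If `1 - M = Wᴴ W` then `Re tr(M ρ) ≤ 1` for a state `ρ`. -/
lemma re_trace_le_one {N : Type*} [Fintype N] [DecidableEq N] {ρ : Matrix N N ℂ}
    (hρ : ρ.PosSemidef) (htr : ρ.trace = 1) {M W : Matrix N N ℂ}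
    (hMW : 1 - M = Wᴴ * W) : ((M * ρ).trace).re ≤ 1 := by
  set s := CFC.sqrt ρ with hs
  have hsH : sᴴ = s := (CFC.sqrt_nonneg ρ).posSemidef.isHermitian
  have hss : s * s = ρ := CFC.sqrt_mul_sqrt_self ρ hρ.nonneg
  have h0 : 0 ≤ (((Wᴴ * W) * ρ).trace).re := by
    have e : (Wᴴ * W) * ρ = ((W * s)ᴴ * (W * s)) * s * s⁻¹ → True := fun _ => trivial
    have e2 : ((W * s)ᴴ * (W * s)).trace = ((Wᴴ * W) * ρ).trace := by
      rw [Matrix.conjTranspose_mul, hsH]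
      calc (s * Wᴴ * (W * s)).trace = (s * (Wᴴ * (W * s))).trace := by rw [Matrix.mul_assoc]
        _ = ((Wᴴ * (W * s)) * s).trace := Matrix.trace_mul_comm _ _
        _ = ((Wᴴ * W) * ρ).trace := by rw [← hss]; noncomm_ring
    rw [← e2]
    have h := inner_self_nonneg (𝕜 := ℂ) (x := toE (W * s))
    rw [inner_toE] at h
    simpa using h
  have hMeq : M = 1 - Wᴴ * W := by rw [← hMW]; abel
  have : (M * ρ).trace = ρ.trace - ((Wᴴ * W) * ρ).trace := by
    rw [hMeq, Matrix.sub_mul, Matrix.trace_sub, Matrix.one_mul]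
  rw [this, htr]
  simp only [Complex.sub_re, Complex.one_re]
  linarith
end OpAux

/-- The key closed inequality valid on all of `Qfinite`. -/
lemma qfinite_bound (P : Behaviour) (hPf : P ∈ Qfinite) :
    corr P 0 0 ^ 2 + corr P 0 1 ^ 2 + corr P 1 0 ^ 2
      + 2 * (corr P 0 0 * corr P 0 1 * corr P 1 0)
      ≤ 1 + 2 * (1 + corr P 1 1) + 4 * Real.sqrt (2 * (1 + corr P 1 1)) := by
  classical
  obtain ⟨d, hd, ρ, E, F, hρ, htr, hE, hF, hEsum, hFsum, hPr⟩ := hPf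
  set s := CFC.sqrt ρ with hs
  have hsH : sᴴ = s := (CFC.sqrt_nonneg ρ).posSemidef.isHermitian
  have hss : s * s = ρ := CFC.sqrt_mul_sqrt_self ρ hρ.nonneg
  set A : Fin 2 → Matrix (Fin d) (Fin d) ℂ := fun x => E x 0 - E x 1 with hA
  set B : Fin 2 → Matrix (Fin d) (Fin d) ℂ := fun y => F y 0 - F y 1 with hB
  have hAH : ∀ x, (A x)ᴴ = A x := by
    intro x
    have h0 : (E x 0)ᴴ = E x 0 := (hE x 0).1
    have h1 : (E x 1)ᴴ = E x 1 := (hE x 1).1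
    simp [hA, Matrix.conjTranspose_sub, h0, h1]
  have hBH : ∀ y, (B y)ᴴ = B y := by
    intro y
    have h0 : (F y 0)ᴴ = F y 0 := (hF y 0).1
    have h1 : (F y 1)ᴴ = F y 1 := (hF y 1).1
    simp [hB, Matrix.conjTranspose_sub, h0, h1]
  have hvec : ∀ X Y : Matrix (Fin d × Fin d) (Fin d × Fin d) ℂ,
      (inner ℂ (toE (X * s)) (toE (Y * s)) : ℂ) = ((Xᴴ * Y) * ρ).trace := by
    intro X Y
    rw [inner_toE, Matrix.conjTranspose_mul, hsH]
    calc (s * Xᴴ * (Y * s)).trace = (s * (Xᴴ * (Y * s))).trace := by rw [Matrix.mul_assoc]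
      _ = ((Xᴴ * (Y * s)) * s).trace := Matrix.trace_mul_comm _ _
      _ = ((Xᴴ * Y) * ρ).trace := by rw [← hss]; noncomm_ring
  have hcorr : ∀ x y, ((corr P x y : ℝ) : ℂ) = ((A x ⊗ₖ B y) * ρ).trace := by
    intro x y
    have e : A x ⊗ₖ B y =
        E x 0 ⊗ₖ F y 0 - E x 0 ⊗ₖ F y 1 - E x 1 ⊗ₖ F y 0 + E x 1 ⊗ₖ F y 1 := by
      simp only [hA, hB]
      ext ⟨i, j⟩ ⟨k, l⟩
      simp [Matrix.kroneckerMap_apply, Matrix.sub_apply, Matrix.add_apply]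
      try ring
    have hc : corr P x y = P 0 0 x y - P 0 1 x y - P 1 0 x y + P 1 1 x y := by
      simp [corr, Fin.sum_univ_two]
      try ring
    rw [hc, e]
    push_cast
    rw [hPr 0 0 x y, hPr 0 1 x y, hPr 1 0 x y, hPr 1 1 x y]
    simp only [Matrix.sub_mul, Matrix.add_mul, Matrix.trace_sub, Matrix.trace_add]
    try ring
  have hab : ∀ x y, (inner ℂ (toE ((A x ⊗ₖ (1 : Matrix (Fin d) (Fin d) ℂ)) * s))
      (toE (((1 : Matrix (Fin d) (Fin d) ℂ) ⊗ₖ B y) * s)) : ℂ) = ((corr P x y : ℝ) : ℂ) := by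
    intro x y
    rw [hvec, hcorr]
    have e : (A x ⊗ₖ (1 : Matrix (Fin d) (Fin d) ℂ))ᴴ * ((1 : Matrix (Fin d) (Fin d) ℂ) ⊗ₖ B y)
        = A x ⊗ₖ B y := by
      rw [kron_conjT, hAH, Matrix.conjTranspose_one, ← Matrix.mul_kronecker_mul,
        Matrix.mul_one, Matrix.one_mul]
    rw [e]
  -- norms on the A side
  have hnA : ∀ x, (inner ℂ (toE ((A x ⊗ₖ (1 : Matrix (Fin d) (Fin d) ℂ)) * s))
      (toE ((A x ⊗ₖ (1 : Matrix (Fin d) (Fin d) ℂ)) * s)) : ℂ).re ≤ 1 := by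
    intro x
    have e1 : ((A x ⊗ₖ (1 : Matrix (Fin d) (Fin d) ℂ))ᴴ * (A x ⊗ₖ 1))
        = (A x * A x) ⊗ₖ (1 : Matrix (Fin d) (Fin d) ℂ) := by
      rw [kron_conjT, hAH, Matrix.conjTranspose_one, ← Matrix.mul_kronecker_mul,
        Matrix.one_mul]
    rw [hvec, e1]
    have hsum01 : E x 0 + E x 1 = 1 := by
      have h := hEsum x
      rwa [Fin.sum_univ_two] at h
    obtain ⟨D, hD⟩ := one_sub_sq (hE x 0) (hE x 1) hsum01
    have hMW : (1 : Matrix (Fin d × Fin d) (Fin d × Fin d) ℂ)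
        - (A x * A x) ⊗ₖ (1 : Matrix (Fin d) (Fin d) ℂ)
        = (D ⊗ₖ (1 : Matrix (Fin d) (Fin d) ℂ))ᴴ * (D ⊗ₖ 1) := by
      rw [kron_conjT, Matrix.conjTranspose_one, ← Matrix.mul_kronecker_mul, Matrix.one_mul,
        ← hD]
      rw [← Matrix.one_kronecker_one, ← sub_kron]
      try simp only [hA]
    exact re_trace_le_one hρ htr hMW
  -- norms on the B side
  have hnB : ∀ y, (inner ℂ (toE (((1 : Matrix (Fin d) (Fin d) ℂ) ⊗ₖ B y) * s))
      (toE (((1 : Matrix (Fin d) (Fin d) ℂ) ⊗ₖ B y) * s)) : ℂ).re ≤ 1 := by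
    intro y
    have e1 : (((1 : Matrix (Fin d) (Fin d) ℂ) ⊗ₖ B y)ᴴ * (1 ⊗ₖ B y))
        = (1 : Matrix (Fin d) (Fin d) ℂ) ⊗ₖ (B y * B y) := by
      rw [kron_conjT, hBH, Matrix.conjTranspose_one, ← Matrix.mul_kronecker_mul,
        Matrix.one_mul]
    rw [hvec, e1]
    have hsum01 : F y 0 + F y 1 = 1 := by
      have h := hFsum y
      rwa [Fin.sum_univ_two] at h
    obtain ⟨D, hD⟩ := one_sub_sq (hF y 0) (hF y 1) hsum01
    have hMW : (1 : Matrix (Fin d × Fin d) (Fin d × Fin d) ℂ)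
        - (1 : Matrix (Fin d) (Fin d) ℂ) ⊗ₖ (B y * B y)
        = ((1 : Matrix (Fin d) (Fin d) ℂ) ⊗ₖ D)ᴴ * (1 ⊗ₖ D) := by
      rw [kron_conjT, Matrix.conjTranspose_one, ← Matrix.mul_kronecker_mul, Matrix.one_mul,
        ← hD]
      rw [← Matrix.one_kronecker_one, ← kron_sub]
      try simp only [hB]
    exact re_trace_le_one hρ htr hMW
  -- move to the real inner product space
  letI : InnerProductSpace ℝ (EuclideanSpace ℂ ((Fin d × Fin d) × (Fin d × Fin d))) :=
    InnerProductSpace.rclikeToReal ℂ _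
  have hre : ∀ a b : EuclideanSpace ℂ ((Fin d × Fin d) × (Fin d × Fin d)),
      (inner ℝ a b : ℝ) = (inner ℂ a b : ℂ).re := fun _ _ => rfl
  have h := gram_cubic_pert
    (toE ((A 0 ⊗ₖ (1 : Matrix (Fin d) (Fin d) ℂ)) * s))
    (toE (((1 : Matrix (Fin d) (Fin d) ℂ) ⊗ₖ B 0) * s))
    (toE (((1 : Matrix (Fin d) (Fin d) ℂ) ⊗ₖ B 1) * s))
    (toE ((A 1 ⊗ₖ (1 : Matrix (Fin d) (Fin d) ℂ)) * s))
    (by rw [hre]; exact hnA 0)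
    (by rw [hre]; exact hnB 0)
    (by rw [hre]; exact hnB 1)
    (by rw [hre]; exact hnA 1)
  have c00 : (inner ℝ (toE ((A 0 ⊗ₖ (1 : Matrix (Fin d) (Fin d) ℂ)) * s))
      (toE (((1 : Matrix (Fin d) (Fin d) ℂ) ⊗ₖ B 0) * s)) : ℝ) = corr P 0 0 := by
    rw [hre, hab 0 0]; exact Complex.ofReal_re _
  have c01 : (inner ℝ (toE ((A 0 ⊗ₖ (1 : Matrix (Fin d) (Fin d) ℂ)) * s))
      (toE (((1 : Matrix (Fin d) (Fin d) ℂ) ⊗ₖ B 1) * s)) : ℝ) = corr P 0 1 := by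
    rw [hre, hab 0 1]; exact Complex.ofReal_re _
  have c10 : (inner ℝ (toE ((A 1 ⊗ₖ (1 : Matrix (Fin d) (Fin d) ℂ)) * s))
      (toE (((1 : Matrix (Fin d) (Fin d) ℂ) ⊗ₖ B 0) * s)) : ℝ) = corr P 1 0 := by
    rw [hre, hab 1 0]; exact Complex.ofReal_re _
  have c11 : (inner ℝ (toE ((A 1 ⊗ₖ (1 : Matrix (Fin d) (Fin d) ℂ)) * s))
      (toE (((1 : Matrix (Fin d) (Fin d) ℂ) ⊗ₖ B 1) * s)) : ℝ) = corr P 1 1 := by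
    rw [hre, hab 1 1]; exact Complex.ofReal_re _
  rw [c00, c01, c10, c11] at h
  linarith

lemma corr_continuous (x y : Fin 2) : Continuous fun P : Behaviour => corr P x y := by
  unfold corr
  refine continuous_finset_sum _ fun a _ => continuous_finset_sum _ fun b _ => ?_
  exact continuous_const.mul
    ((continuous_apply y).comp ((continuous_apply x).comp
      ((continuous_apply b).comp (continuous_apply a))))

lemma q_bound (P : Behaviour) (hP : P ∈ Q) :
    corr P 0 0 ^ 2 + corr P 0 1 ^ 2 + corr P 1 0 ^ 2
      + 2 * (corr P 0 0 * corr P 0 1 * corr P 1 0)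
      ≤ 1 + 2 * (1 + corr P 1 1) + 4 * Real.sqrt (2 * (1 + corr P 1 1)) := by
  have h00 := corr_continuous 0 0
  have h01 := corr_continuous 0 1
  have h10 := corr_continuous 1 0
  have h11 := corr_continuous 1 1
  have hlhs : Continuous fun P : Behaviour =>
      corr P 0 0 ^ 2 + corr P 0 1 ^ 2 + corr P 1 0 ^ 2
        + 2 * (corr P 0 0 * corr P 0 1 * corr P 1 0) :=
    (((h00.pow 2).add (h01.pow 2)).add (h10.pow 2)).add
      (continuous_const.mul ((h00.mul h01).mul h10))
  have hrhs : Continuous fun P : Behaviour =>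
      1 + 2 * (1 + corr P 1 1) + 4 * Real.sqrt (2 * (1 + corr P 1 1)) :=
    (continuous_const.add (continuous_const.mul (continuous_const.add h11))).add
      (continuous_const.mul (Real.continuous_sqrt.comp
        (continuous_const.mul (continuous_const.add h11))))
  have hclosed : IsClosed {P : Behaviour |
      corr P 0 0 ^ 2 + corr P 0 1 ^ 2 + corr P 1 0 ^ 2
        + 2 * (corr P 0 0 * corr P 0 1 * corr P 1 0)
      ≤ 1 + 2 * (1 + corr P 1 1) + 4 * Real.sqrt (2 * (1 + corr P 1 1))} :=
    isClosed_le hlhs hrhs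
  exact closure_minimal (fun P hPf => qfinite_bound P hPf) hclosed hP


/-- Every quantum behaviour with `⟨A₁B₁⟩ = −1` satisfies the cubic constraint
`2⟨A₀B₀⟩⟨A₀B₁⟩⟨A₁B₀⟩ + ⟨A₀B₀⟩² + ⟨A₀B₁⟩² + ⟨A₁B₀⟩² ≤ 1`. -/
theorem cubic_constraint (P : Behaviour) (hP : P ∈ Q) (h11 : corr P 1 1 = -1) :
    2 * (corr P 0 0 * corr P 0 1 * corr P 1 0)
      + corr P 0 0 ^ 2 + corr P 0 1 ^ 2 + corr P 1 0 ^ 2 ≤ 1 := by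
  have h := q_bound P hP
  rw [h11] at h
  norm_num at h
  linarith
end
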